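/- Let Σ be positive definite, π ∈ ℝ^K with πᵀΣπ > 0, c = (πᵀΣπ)⁻¹, λ ≥ 0. Define θ̂ʰ = (Σ⁻¹ + λππᵀ)⁻¹ (Σ⁻¹ θ̂ + λ θ̂ʳ π). Then θ̂ʰ = θ̂ + c·(λ/(λ+c))·(θ̂ʳ − πᵀθ̂)·Σπ. -/

import Mathlib

open Matrix

/-- The harmonized estimator as a shift of the initial estimate in direction `Σπ`. -/
theorem harmonized_shift_form {K : ℕ}
    (Sig : Matrix (Fin K) (Fin K) ℝ) (hSig : Sig.PosDef)
    (π θhat : Fin K → ℝ) (hπSπ : 0 < π ⬝ᵥ (Sig *ᵥ π))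
    (θr : ℝ) (lam : ℝ) (hlam : 0 ≤ lam) :
    let c : ℝ := (π ⬝ᵥ (Sig *ᵥ π))⁻¹
    (Sig⁻¹ + lam • vecMulVec π π)⁻¹ *ᵥ (Sig⁻¹ *ᵥ θhat + (lam * θr) • π) =
      θhat + (c * (lam / (lam + c)) * (θr - π ⬝ᵥ θhat)) • (Sig *ᵥ π) := by
  intro c
  set q : ℝ := π ⬝ᵥ (Sig *ᵥ π) with hq
  have hc : c = q⁻¹ := rfl
  have hcpos : 0 < c := inv_pos.mpr hπSπ
  set A : Matrix (Fin K) (Fin K) ℝ := Sig⁻¹ + lam • vecMulVec π π with hA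
  have hvm : ∀ x : Fin K → ℝ,
      (lam • vecMulVec π π : Matrix (Fin K) (Fin K) ℝ) *ᵥ x = (lam * (π ⬝ᵥ x)) • π := by
    intro x
    ext i
    simp only [mulVec, dotProduct, vecMulVec_apply, Matrix.smul_apply, Pi.smul_apply, smul_eq_mul,
      Finset.sum_mul, Finset.mul_sum]
    refine Finset.sum_congr rfl fun j _ => ?_
    ring
  -- A is PosDef
  have hvv : (lam • vecMulVec π π : Matrix (Fin K) (Fin K) ℝ).PosSemidef := by
    rw [Matrix.posSemidef_iff_dotProduct_mulVec]
    constructor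
    · ext i j
      simp [vecMulVec_apply, mul_comm, Matrix.IsHermitian]
    · intro x
      rw [hvm x]
      simp only [star_trivial, dotProduct_smul, smul_eq_mul]
      rw [mul_assoc]
      exact mul_nonneg hlam (by rw [dotProduct_comm]; exact mul_self_nonneg _)
  have hApos : A.PosDef := hSig.inv.add_posSemidef hvv
  have hAunit := hApos.isUnit
  -- key: A *ᵥ RHS = v
  set s : ℝ := c * (lam / (lam + c)) * (θr - π ⬝ᵥ θhat) with hs
  have hSinv : Sig⁻¹ *ᵥ (Sig *ᵥ π) = π := by
    rw [mulVec_mulVec, Matrix.nonsing_inv_mul _ hSig.det_pos.ne'.isUnit, one_mulVec]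
  have hscal : lam * (π ⬝ᵥ θhat) + (s + s * (lam * q)) = lam * θr := by
    have hcne : c ≠ 0 := hcpos.ne'
    have hlc : lam + c ≠ 0 := by positivity
    have hqc : q = c⁻¹ := by rw [hc, inv_inv]
    rw [hs, hqc]
    field_simp
    ring
  have hAv : A *ᵥ (θhat + s • (Sig *ᵥ π)) = Sig⁻¹ *ᵥ θhat + (lam * θr) • π := by
    rw [hA, add_mulVec, mulVec_add, mulVec_add, mulVec_smul, mulVec_smul, hSinv, hvm θhat,
      hvm (Sig *ᵥ π), ← hq]
    ext i
    simp only [Pi.add_apply, Pi.smul_apply, smul_eq_mul]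
    linear_combination π i * hscal
  rw [← hAv, mulVec_mulVec, Matrix.nonsing_inv_mul _ hApos.det_pos.ne'.isUnit, one_mulVec]
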